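/- Let κ ≥ 1 and let ε_inv, ε_rect be real numbers with 0 < ε_rect ≤ ε_inv ≤ 1. Let P_inv : [−1, 1] → ℝ satisfy |P_inv(x) − 1/x| ≤ ε_inv and |P_inv(x)| ≤ κ + ε_inv for all x with 1/κ ≤ |x| ≤ 1, and let P_rect : [−1, 1] → ℝ satisfy |P_rect(x)| ≤ ε_rect for all x with 1/κ ≤ |x| ≤ 1. Define P_MI(x) := (1 − P_rect(x))·P_inv(x) / (2κ·(1 + ε_inv)). Then for every x with 1/κ ≤ |x| ≤ 1, |P_MI(x) − 1/(2κx)| ≤ 2·ε_inv. -/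

import Mathlib

/-- The matrix-inversion polynomial `P_MI(x) = (1 − P_rect(x))·P_inv(x)/(2κ(1+ε_inv))`
approximates `1/(2κx)` to accuracy `2ε_inv` on `1/κ ≤ |x| ≤ 1`. -/
theorem stmt_12 (κ εinv εrect : ℝ) (hκ : 1 ≤ κ)
    (hrect_pos : 0 < εrect) (hrect_le : εrect ≤ εinv) (hinv_le : εinv ≤ 1)
    (Pinv Prect : ℝ → ℝ)
    (hPinv_close : ∀ x ∈ Set.Icc (-1 : ℝ) 1, 1 / κ ≤ |x| → |Pinv x - 1 / x| ≤ εinv)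
    (hPinv_bd : ∀ x ∈ Set.Icc (-1 : ℝ) 1, 1 / κ ≤ |x| → |Pinv x| ≤ κ + εinv)
    (hPrect : ∀ x ∈ Set.Icc (-1 : ℝ) 1, 1 / κ ≤ |x| → |Prect x| ≤ εrect) :
    ∀ x ∈ Set.Icc (-1 : ℝ) 1, 1 / κ ≤ |x| →
      |(1 - Prect x) * Pinv x / (2 * κ * (1 + εinv)) - 1 / (2 * κ * x)| ≤ 2 * εinv := by
  intro x hx hxk
  have hκ0 : (0:ℝ) < κ := lt_of_lt_of_le one_pos hκ
  have hεinv0 : 0 < εinv := lt_of_lt_of_le hrect_pos hrect_le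
  have hxabs : 0 < |x| := lt_of_lt_of_le (by positivity) hxk
  have hx0 : x ≠ 0 := fun h => by simp [h] at hxabs
  have hd0 : (0:ℝ) < 2 * κ * (1 + εinv) := by positivity
  have h1x : |1 / x| ≤ κ := by
    rw [abs_div, abs_one, div_le_iff₀ hxabs]
    calc (1:ℝ) = κ * (1/κ) := by field_simp
    _ ≤ κ * |x| := by
        exact mul_le_mul_of_nonneg_left hxk (le_of_lt hκ0)
  have key : (1 - Prect x) * Pinv x / (2 * κ * (1 + εinv)) - 1 / (2 * κ * x)
      = ((Pinv x - 1/x) - Prect x * Pinv x - εinv * (1/x)) / (2 * κ * (1 + εinv)) := by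
    field_simp
    ring
  rw [key, abs_div, abs_of_pos hd0, div_le_iff₀ hd0]
  have h1 := hPinv_close x hx hxk
  have h2 := hPinv_bd x hx hxk
  have h3 := hPrect x hx hxk
  have hb : |(Pinv x - 1/x) - Prect x * Pinv x - εinv * (1/x)|
      ≤ εinv + εinv * (κ + εinv) + εinv * κ := by
    have t1 : |Prect x * Pinv x| ≤ εinv * (κ + εinv) := by
      rw [abs_mul]
      exact mul_le_mul (le_trans h3 hrect_le) h2 (abs_nonneg _) (le_of_lt hεinv0)
    have t2 : |εinv * (1/x)| ≤ εinv * κ := by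
      rw [abs_mul, abs_of_pos hεinv0]
      exact mul_le_mul_of_nonneg_left h1x (le_of_lt hεinv0)
    calc |(Pinv x - 1/x) - Prect x * Pinv x - εinv * (1/x)|
        ≤ |(Pinv x - 1/x) - Prect x * Pinv x| + |εinv * (1/x)| := abs_sub _ _
      _ ≤ |Pinv x - 1/x| + |Prect x * Pinv x| + |εinv * (1/x)| := by
          exact add_le_add (abs_sub _ _) le_rfl
      _ ≤ εinv + εinv * (κ + εinv) + εinv * κ := by
          gcongr
  refine hb.trans ?_
  nlinarith [mul_pos hεinv0 hκ0, mul_nonneg hεinv0.le hεinv0.le,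
    mul_nonneg (mul_nonneg hεinv0.le hεinv0.le) (sub_nonneg.mpr hκ)]
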